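/- Let G be a compact metrizable topological group, H a closed subgroup not contained in any other proper closed subgroup of G, X = G/H, \phi: X \to G a measurable section of the quotient map. Let (x_m) be uniformly distributed in X (w.r.t. the G-invariant probability measure) and (h_m) uniformly distributed in H (w.r.t. Haar measure on H). Let (u_m) = ((x_{i(m)}, h_{j(m)})) be the convolution of the two sequences (so that every pair (x_i, h_j) occurs in the sequence). Then the sequence (\phi(x_{i(m)}) h_{j(m)}) in G is not contained in any proper closed subgroup of G. -/

import Mathlib

open MeasureTheory Filter Topology

/-- Uniform distribution via sampling averages of continuous functions. -/
def IsUniformlyDistributed {X : Type*} [TopologicalSpace X] [MeasurableSpace X]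
    (μ : Measure X) (w : ℕ → X) : Prop :=
  ∀ f : C(X, ℝ),
    Tendsto (fun N : ℕ => (∑ m ∈ Finset.range N, f (w m)) / (N : ℝ)) atTop
      (𝓝 (∫ x, f x ∂μ))

/-- A uniformly distributed sequence (w.r.t. a measure positive on opens) in a
compact Hausdorff space has dense range. -/
lemma denseRange_of_isUniformlyDistributed {X : Type*} [TopologicalSpace X]
    [MeasurableSpace X] [OpensMeasurableSpace X] [CompactSpace X] [T2Space X]
    (μ : Measure X) [IsProbabilityMeasure μ] [μ.IsOpenPosMeasure]
    (w : ℕ → X) (hw : IsUniformlyDistributed μ w) : DenseRange w := by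
  intro y
  by_contra hy
  obtain ⟨f, hf0, hf1, hf01⟩ :=
    exists_continuous_zero_one_of_isClosed (isClosed_closure (s := Set.range w))
      isClosed_singleton (Set.disjoint_singleton_right.mpr hy)
  have hnonneg : ∀ z, 0 ≤ f z := fun z => (hf01 z).1
  have hint : Integrable f μ :=
    f.continuous.integrable_of_hasCompactSupport (HasCompactSupport.of_compactSpace f)
  have hzero : ∀ m, f (w m) = 0 := fun m =>
    hf0 (subset_closure (Set.mem_range_self m))
  have h1 : Tendsto (fun N : ℕ => (∑ m ∈ Finset.range N, f (w m)) / (N : ℝ)) atTop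
      (𝓝 0) := by
    have : (fun N : ℕ => (∑ m ∈ Finset.range N, f (w m)) / (N : ℝ)) = fun _ => (0 : ℝ) := by
      funext N
      simp [hzero]
    rw [this]
    exact tendsto_const_nhds
  have h2 := hw f
  have heq : (0 : ℝ) = ∫ z, f z ∂μ := tendsto_nhds_unique h1 h2
  have hpos : 0 < ∫ z, f z ∂μ := by
    rw [integral_pos_iff_support_of_nonneg_ae (Filter.Eventually.of_forall hnonneg) hint]
    refine f.continuous.isOpen_support.measure_pos μ ⟨y, ?_⟩
    simp [Function.mem_support, hf1 (Set.mem_singleton y)]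
  exact absurd heq (by linarith)

theorem convolution_sequence_not_in_proper_closed_subgroup
    {G : Type*} [Group G] [TopologicalSpace G] [IsTopologicalGroup G] [CompactSpace G]
    [TopologicalSpace.MetrizableSpace G] [MeasurableSpace G] [BorelSpace G]
    (μ : Measure G) [μ.IsHaarMeasure] [IsProbabilityMeasure μ]
    (H : Subgroup G) (hHcl : IsClosed (H : Set G)) (hHproper : H ≠ ⊤)
    -- H is not contained in any other proper closed subgroup of G
    (hHmax : ∀ F : Subgroup G, IsClosed (F : Set G) → F ≠ ⊤ → H ≤ F → F = H)
    [MeasurableSpace (G ⧸ H)] [BorelSpace (G ⧸ H)]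
    (ρH : Measure H) [ρH.IsHaarMeasure] [IsProbabilityMeasure ρH]
    (φ : G ⧸ H → G) (hφmeas : Measurable φ)
    (hφ : ∀ q : G ⧸ H, (QuotientGroup.mk (φ q) : G ⧸ H) = q)
    (x : ℕ → G ⧸ H)
    (hx : IsUniformlyDistributed (μ.map (QuotientGroup.mk : G → G ⧸ H)) x)
    (h : ℕ → H) (hh : IsUniformlyDistributed ρH h)
    (i j : ℕ → ℕ)
    -- the convolution ordering: every pair of indices occurs
    (hconv : ∀ a b : ℕ, ∃ m : ℕ, i m = a ∧ j m = b)
    (F : Subgroup G) (hFcl : IsClosed (F : Set G))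
    (hmem : ∀ m : ℕ, φ (x (i m)) * (h (j m) : G) ∈ F) :
    F = ⊤ := by
  classical
  -- H is compact
  haveI : CompactSpace H := isCompact_iff_compactSpace.mp hHcl.isCompact
  haveI : OpensMeasurableSpace H := Subtype.opensMeasurableSpace (H : Set G)
  have hmk : Measurable (QuotientGroup.mk : G → G ⧸ H) :=
    Continuous.measurable (f := (QuotientGroup.mk : G → G ⧸ H)) continuous_quot_mk
  -- the sequence h is dense in H
  have hdenseH : DenseRange h := denseRange_of_isUniformlyDistributed ρH h hh
  -- Step 1: H ≤ F
  have key : ∀ b b' : ℕ, ((h b : G))⁻¹ * (h b' : G) ∈ F := by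
    intro b b'
    obtain ⟨m, him, hjm⟩ := hconv 0 b
    obtain ⟨m', him', hjm'⟩ := hconv 0 b'
    have h1 := hmem m
    have h2 := hmem m'
    rw [him, hjm] at h1
    rw [him', hjm'] at h2
    have := F.mul_mem (F.inv_mem h1) h2
    simpa [mul_assoc] using this
  have hHF : H ≤ F := by
    intro y hy
    -- consider y as an element of H
    set yH : H := ⟨y, hy⟩
    have hyc : yH ∈ closure (Set.range h) := hdenseH yH
    -- the set {(h 0)⁻¹ * h b'} is contained in F; its closure contains (h 0)⁻¹ * y
    have hsub : (fun z : H => ((h 0 : G))⁻¹ * (z : G)) '' Set.range h ⊆ (F : Set G) := by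
      rintro _ ⟨z, ⟨b', rfl⟩, rfl⟩
      exact key 0 b'
    have hcont : Continuous (fun z : H => ((h 0 : G))⁻¹ * (z : G)) :=
      continuous_const.mul continuous_subtype_val
    have hmem1 : ((h 0 : G))⁻¹ * (y : G) ∈ closure ((fun z : H => ((h 0 : G))⁻¹ * (z : G)) '' Set.range h) := by
      have := image_closure_subset_closure_image (f := fun z : H => ((h 0 : G))⁻¹ * (z : G))
        (s := Set.range h) hcont
      exact this ⟨yH, hyc, rfl⟩
    have hF1 : ((h 0 : G))⁻¹ * y ∈ F := by
      have := closure_minimal hsub hFcl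
      exact this hmem1
    -- also (h 0)⁻¹ ∈ F since 1 ∈ H is a limit of h b'
    have h0F : (h 0 : G) ∈ F := by
      have := key 0 0
      -- (h 0)⁻¹ * h 0 = 1 ∈ F, trivial; instead use key with b' = 0? Need h 0 itself.
      -- h 0 ∈ F: from hF1 applied to y = 1? 1 ∈ H.
      have h1F : ((h 0 : G))⁻¹ * ((1 : H) : G) ∈ closure ((fun z : H => ((h 0 : G))⁻¹ * (z : G)) '' Set.range h) := by
        have h1c : (1 : H) ∈ closure (Set.range h) := hdenseH 1
        have := image_closure_subset_closure_image (f := fun z : H => ((h 0 : G))⁻¹ * (z : G))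
          (s := Set.range h) hcont
        exact this ⟨1, h1c, rfl⟩
      have : ((h 0 : G))⁻¹ * ((1 : H) : G) ∈ F := closure_minimal hsub hFcl h1F
      simpa using F.inv_mem this
    have : (h 0 : G) * (((h 0 : G))⁻¹ * y) ∈ F := F.mul_mem h0F hF1
    simpa [mul_assoc] using this
  -- Step 2: suppose F ≠ ⊤; then F = H, contradiction via density of x
  by_contra hFtop
  have hFH : F = H := hHmax F hFcl hFtop hHF
  -- every x a equals the trivial coset
  have hxone : ∀ a : ℕ, x a = (QuotientGroup.mk (1 : G) : G ⧸ H) := by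
    intro a
    obtain ⟨m, him, hjm⟩ := hconv a 0
    have h1 := hmem m
    rw [him, hjm, hFH] at h1
    have hφH : φ (x a) ∈ H := by
      have := H.mul_mem h1 (H.inv_mem (h 0).2)
      simpa [mul_assoc] using this
    rw [← hφ (x a)]
    exact QuotientGroup.eq.mpr (by simpa using H.inv_mem hφH)
  -- G ⧸ H is compact Hausdorff
  haveI : T2Space (G ⧸ H) := by
    rw [t2_iff_isClosed_diagonal]
    have hq : IsQuotientMap (Prod.map (QuotientGroup.mk : G → G ⧸ H) QuotientGroup.mk) :=
      ((QuotientGroup.isOpenQuotientMap_mk (N := H)).prodMap (QuotientGroup.isOpenQuotientMap_mk (N := H))).isQuotientMap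
    rw [← hq.isClosed_preimage]
    have : Prod.map (QuotientGroup.mk : G → G ⧸ H) QuotientGroup.mk ⁻¹' Set.diagonal (G ⧸ H)
        = (fun p : G × G => p.1⁻¹ * p.2) ⁻¹' (H : Set G) := by
      ext p
      simp only [Set.mem_preimage, Set.mem_diagonal_iff, Prod.map_fst, Prod.map_snd,
        Prod.map_apply]
      exact QuotientGroup.eq
    rw [this]
    exact hHcl.preimage (continuous_fst.inv.mul continuous_snd)
  -- the pushforward measure is positive on opens
  haveI : (μ.map (QuotientGroup.mk : G → G ⧸ H)).IsOpenPosMeasure := by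
    constructor
    intro U hU hUne
    rw [Measure.map_apply hmk hU.measurableSet]
    refine ((hU.preimage continuous_quot_mk).measure_pos μ ?_).ne'
    obtain ⟨q, hq⟩ := hUne
    exact ⟨φ q, show (QuotientGroup.mk (φ q) : G ⧸ H) ∈ U by rw [hφ q]; exact hq⟩
  haveI : IsProbabilityMeasure (μ.map (QuotientGroup.mk : G → G ⧸ H)) :=
    Measure.isProbabilityMeasure_map hmk.aemeasurable
  have hdenseX : DenseRange x :=
    denseRange_of_isUniformlyDistributed (μ.map (QuotientGroup.mk : G → G ⧸ H)) x hx
  -- but the range of x is {1}, so G ⧸ H is a single point, i.e. H = ⊤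
  have : H = ⊤ := by
    rw [eq_top_iff]
    intro g _
    have hg : (QuotientGroup.mk g : G ⧸ H) ∈ closure (Set.range x) := hdenseX _
    have hr : Set.range x ⊆ {(QuotientGroup.mk (1 : G) : G ⧸ H)} := by
      rintro _ ⟨a, rfl⟩
      exact hxone a
    have hmem1 : (QuotientGroup.mk g : G ⧸ H)
        ∈ ({(QuotientGroup.mk (1 : G) : G ⧸ H)} : Set (G ⧸ H)) :=
      closure_minimal hr isClosed_singleton hg
    rw [Set.mem_singleton_iff] at hmem1
    have := QuotientGroup.eq.mp hmem1
    simpa using H.inv_mem this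
  exact hHproper this
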